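/- Every acyclic weakly l.f.g.u. monoid is FmF-atomic. -/

import Mathlib

open Pointwise

namespace FactPaper

/-- `u` is a `≼`-unit for the preorder-like relation `r` on a monoid. -/
def RUnit {M : Type*} [Monoid M] (r : M → M → Prop) (u : M) : Prop :=
  r u 1 ∧ r 1 u

/-- `u` is a `≼`-non-unit. -/
def RNonUnit {M : Type*} [Monoid M] (r : M → M → Prop) (u : M) : Prop :=
  ¬ RUnit r u

/-- The strict part `≺` of the relation `r`. -/
def RLt {M : Type*} (r : M → M → Prop) (x y : M) : Prop :=
  r x y ∧ ¬ r y x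

/-- `a` is a `≼`-irreducible. -/
def RIrred {M : Type*} [Monoid M] (r : M → M → Prop) (a : M) : Prop :=
  RNonUnit r a ∧
    ∀ y z : M, RNonUnit r y → RNonUnit r z → RLt r y a → RLt r z a → a ≠ y * z

/-- `a` is a `≼`-atom. -/
def RAtom {M : Type*} [Monoid M] (r : M → M → Prop) (a : M) : Prop :=
  RNonUnit r a ∧ ∀ y z : M, RNonUnit r y → RNonUnit r z → a ≠ y * z

/-- `a` is a `≼`-quark. -/
def RQuark {M : Type*} [Monoid M] (r : M → M → Prop) (a : M) : Prop :=
  RNonUnit r a ∧ ¬ ∃ b : M, RNonUnit r b ∧ RLt r b a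

/-- The divisibility preorder: `Dvd2 x y` iff `y ∈ M x M`. -/
def Dvd2 {M : Type*} [Monoid M] (x y : M) : Prop :=
  ∃ u v : M, y = u * x * v

/-- The restriction of a relation on `M` to a submonoid `K`. -/
def SubRel {M : Type*} [Monoid M] (r : M → M → Prop) (K : Submonoid M) (a b : K) : Prop :=
  r (a : M) (b : M)

/-- The preorder `⊑` on words induced by `r`: an injection of indices matching
`r`-equivalent letters. -/
def WordLe {M : Type*} (r : M → M → Prop) (l m : List M) : Prop :=
  ∃ σ : Fin l.length ↪ Fin m.length,
    ∀ i : Fin l.length, r (l.get i) (m.get (σ i)) ∧ r (m.get (σ i)) (l.get i)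

/-- `⊑`-equivalence of words. -/
def WordEquiv {M : Type*} (r : M → M → Prop) (l m : List M) : Prop :=
  WordLe r l m ∧ WordLe r m l

/-- `l` is a `≼`-factorization of `x`: a word of `≼`-irreducibles with product `x`. -/
def IsFac {M : Type*} [Monoid M] (r : M → M → Prop) (x : M) (l : List M) : Prop :=
  (∀ a ∈ l, RIrred r a) ∧ l.prod = x

/-- `l` is a minimal `≼`-factorization of `x`: a `⊑`-minimal `≼`-factorization. -/
def IsMinFac {M : Type*} [Monoid M] (r : M → M → Prop) (x : M) (l : List M) : Prop :=
  IsFac r x l ∧ ∀ m : List M, IsFac r x m → WordLe r m l → WordLe r l m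

/-- `l` is an atomic `≼`-factorization of `x`. -/
def IsAtomicFac {M : Type*} [Monoid M] (r : M → M → Prop) (x : M) (l : List M) : Prop :=
  (∀ a ∈ l, RAtom r a) ∧ l.prod = x

/-- `l` is a minimal atomic `≼`-factorization of `x`. -/
def IsMinAtomicFac {M : Type*} [Monoid M] (r : M → M → Prop) (x : M) (l : List M) : Prop :=
  IsMinFac r x l ∧ ∀ a ∈ l, RAtom r a

/-- Every `≼`-non-unit is a non-empty product of `≼`-irreducibles. -/
def Factorable {M : Type*} [Monoid M] (r : M → M → Prop) : Prop :=
  ∀ x : M, RNonUnit r x →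
    ∃ l : List M, l ≠ [] ∧ (∀ a ∈ l, RIrred r a) ∧ l.prod = x

/-- Every `≼`-non-unit is a non-empty product of `≼`-atoms. -/
def Atomic {M : Type*} [Monoid M] (r : M → M → Prop) : Prop :=
  ∀ x : M, RNonUnit r x →
    ∃ l : List M, l ≠ [] ∧ (∀ a ∈ l, RAtom r a) ∧ l.prod = x

/-- The premonoid `(M, r)` is finitely generated up to units. -/
def IsFGU {M : Type*} [Monoid M] (r : M → M → Prop) : Prop :=
  ∃ A : Set M, A.Finite ∧
    Submonoid.closure
      {w : M | ∃ u a v : M, RUnit r u ∧ a ∈ A ∧ RUnit r v ∧ w = u * a * v} = ⊤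

/-- The submonoid generated by the `∣_M`-divisors of `x` (ground monoid of the germ of a
premonoid at `x`). -/
def GermSub {M : Type*} [Monoid M] (x : M) : Submonoid M :=
  Submonoid.closure {y : M | Dvd2 y x}

/-- Membership in the smallest divisor-closed submonoid containing `x`. -/
inductive InDC {M : Type*} [Monoid M] (x : M) : M → Prop
  | base : InDC x x
  | one : InDC x 1
  | mul {a b : M} : InDC x a → InDC x b → InDC x (a * b)
  | dvd {a b : M} : InDC x b → Dvd2 a b → InDC x a

/-- The smallest divisor-closed submonoid of `M` containing `x`. -/
def DCSub {M : Type*} [Monoid M] (x : M) : Submonoid M where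
  carrier := {y : M | InDC x y}
  mul_mem' := fun ha hb => InDC.mul ha hb
  one_mem' := InDC.one

/-- `(M, r)` is a weakly positive monoid. -/
def WeaklyPositive {M : Type*} [Monoid M] (r : M → M → Prop) : Prop :=
  (∀ x u v : M, RUnit r u → RUnit r v → r (u * x * v) x) ∧
    (∀ x a b : M, r x (a * x * b))

/-- `(M, r)` is locally of finite type (loft). -/
def IsLoft {M : Type*} [Monoid M] (r : M → M → Prop) : Prop :=
  ∀ x : M, RNonUnit r x →
    ∃ A : Set M, A.Finite ∧ A ⊆ {a : M | RIrred r a} ∧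
      ∀ l : List M, IsFac r x l →
        ∃ m : List M, (∀ a ∈ m, a ∈ A) ∧ WordEquiv r l m

/-- `(M, r)` is BF-factorable. -/
def IsBFFactorable {M : Type*} [Monoid M] (r : M → M → Prop) : Prop :=
  ∀ x : M, RNonUnit r x →
    {n : ℕ | ∃ l : List M, IsFac r x l ∧ l.length = n}.Finite ∧
      {n : ℕ | ∃ l : List M, IsFac r x l ∧ l.length = n}.Nonempty

/-- `(M, r)` is BmF-factorable. -/
def IsBmFFactorable {M : Type*} [Monoid M] (r : M → M → Prop) : Prop :=
  ∀ x : M, RNonUnit r x →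
    {n : ℕ | ∃ l : List M, IsMinFac r x l ∧ l.length = n}.Finite ∧
      {n : ℕ | ∃ l : List M, IsMinFac r x l ∧ l.length = n}.Nonempty

/-- `(M, r)` is FF-factorable: modulo `⊑`-equivalence, every `≼`-non-unit has finitely
many (and at least one) `≼`-factorizations. -/
def IsFFFactorable {M : Type*} [Monoid M] (r : M → M → Prop) : Prop :=
  ∀ x : M, RNonUnit r x →
    (∃ l : List M, IsFac r x l) ∧
      ∃ F : Set (List M), F.Finite ∧
        ∀ l : List M, IsFac r x l → ∃ m ∈ F, IsFac r x m ∧ WordEquiv r l m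

/-- `(M, r)` is FmF-factorable. -/
def IsFmFFactorable {M : Type*} [Monoid M] (r : M → M → Prop) : Prop :=
  ∀ x : M, RNonUnit r x →
    (∃ l : List M, IsMinFac r x l) ∧
      ∃ F : Set (List M), F.Finite ∧
        ∀ l : List M, IsMinFac r x l → ∃ m ∈ F, IsMinFac r x m ∧ WordEquiv r l m

/-- `(M, r)` is FF-atomic. -/
def IsFFAtomic {M : Type*} [Monoid M] (r : M → M → Prop) : Prop :=
  ∀ x : M, RNonUnit r x →
    (∃ l : List M, IsAtomicFac r x l) ∧
      ∃ F : Set (List M), F.Finite ∧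
        ∀ l : List M, IsAtomicFac r x l → ∃ m ∈ F, IsAtomicFac r x m ∧ WordEquiv r l m

/-- `(M, r)` is FmF-atomic. -/
def IsFmFAtomic {M : Type*} [Monoid M] (r : M → M → Prop) : Prop :=
  ∀ x : M, RNonUnit r x →
    (∃ l : List M, IsMinAtomicFac r x l) ∧
      ∃ F : Set (List M), F.Finite ∧
        ∀ l : List M, IsMinAtomicFac r x l → ∃ m ∈ F, IsMinAtomicFac r x m ∧ WordEquiv r l m


section Aux
variable {H : Type*} [Monoid H]

def Acyc (H : Type*) [Monoid H] : Prop := ∀ u v x : H, (¬ IsUnit u ∨ ¬ IsUnit v) → u * x * v ≠ x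

theorem unit_conj (e f : Hˣ) (a : H) : ↑e⁻¹ * (↑e * a * ↑f) * ↑f⁻¹ = a := by
  simp [mul_assoc]

theorem dvd2_refl (x : H) : Dvd2 x x := ⟨1, 1, by simp⟩

theorem dvd2_trans {x y z : H} (h1 : Dvd2 x y) (h2 : Dvd2 y z) : Dvd2 x z := by
  obtain ⟨u, v, rfl⟩ := h1; obtain ⟨p, q, rfl⟩ := h2
  exact ⟨p * u, v * q, by simp [mul_assoc]⟩

theorem units_of_sandwich (hacy : Acyc H) {u v x : H} (h : u * x * v = x) :
    IsUnit u ∧ IsUnit v := by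
  by_contra hc
  rcases not_and_or.mp hc with h1 | h1
  · exact hacy u v x (Or.inl h1) h
  · exact hacy u v x (Or.inr h1) h

theorem isUnit_of_mul_eq_one' (hacy : Acyc H) {z c : H} (h : z * c = 1) :
    IsUnit z ∧ IsUnit c := by
  have := units_of_sandwich hacy (x := 1) (u := z) (v := c) (by simpa using h)
  simpa using this

theorem isUnit_of_right_inv (hacy : Acyc H) {z c : H} (h : z * c = 1) : IsUnit z :=
  (isUnit_of_mul_eq_one' hacy h).1

theorem isUnit_of_left_inv (hacy : Acyc H) {z c : H} (h : z * c = 1) : IsUnit c :=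
  (isUnit_of_mul_eq_one' hacy h).2

theorem dvd2_one_iff (hacy : Acyc H) {u : H} : Dvd2 u 1 ↔ IsUnit u := by
  constructor
  · rintro ⟨a, b, hb⟩
    have hab : (a * u) * b = 1 := hb.symm
    have h3 : IsUnit (u * b) := isUnit_of_left_inv hacy (by rw [← mul_assoc]; exact hab)
    obtain ⟨b', hb'⟩ := isUnit_of_left_inv hacy hab
    have : u = (u * b) * ↑b'⁻¹ := by rw [← hb', Units.mul_inv_cancel_right]
    rw [this]
    exact h3.mul (b'⁻¹).isUnit
  · rintro ⟨u', rfl⟩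
    exact ⟨↑u'⁻¹, 1, by simp⟩

theorem runit_iff (hacy : Acyc H) {u : H} : RUnit (Dvd2 : H → H → Prop) u ↔ IsUnit u := by
  constructor
  · rintro ⟨h1, -⟩; exact (dvd2_one_iff hacy).mp h1
  · intro h; exact ⟨(dvd2_one_iff hacy).mpr h, ⟨1, u, by simp⟩⟩

theorem rnonunit_iff (hacy : Acyc H) {u : H} :
    RNonUnit (Dvd2 : H → H → Prop) u ↔ ¬ IsUnit u := by
  rw [RNonUnit, runit_iff hacy]

theorem not_isUnit_mul_left (hacy : Acyc H) {y z : H} (hy : ¬ IsUnit y) : ¬ IsUnit (y * z) := by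
  rintro ⟨w, hw⟩
  exact hy (isUnit_of_right_inv hacy (z := y) (c := z * ↑w⁻¹)
    (by rw [← mul_assoc, ← hw, Units.mul_inv]))

theorem not_isUnit_mul_right (hacy : Acyc H) {y z : H} (hz : ¬ IsUnit z) : ¬ IsUnit (y * z) := by
  rintro ⟨w, hw⟩
  exact hz (isUnit_of_left_inv hacy (z := ↑w⁻¹ * y) (c := z)
    (by rw [mul_assoc, ← hw, Units.inv_mul]))

/-- sandwiching by units preserves the ∼ class -/
theorem sandwich_equiv {e f a : H} (he : IsUnit e) (hf : IsUnit f) :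
    Dvd2 (e * a * f) a ∧ Dvd2 a (e * a * f) := by
  obtain ⟨e', rfl⟩ := he; obtain ⟨f', rfl⟩ := hf
  exact ⟨⟨↑e'⁻¹, ↑f'⁻¹, (unit_conj e' f' a).symm⟩, ⟨↑e', ↑f', rfl⟩⟩

theorem isUnit_of_sandwich_unit (hacy : Acyc H) {e f a : H} (he : IsUnit e) (hf : IsUnit f)
    (h : IsUnit (e * a * f)) : IsUnit a := by
  obtain ⟨e', rfl⟩ := he; obtain ⟨f', rfl⟩ := hf
  rw [← unit_conj e' f' a]
  exact ((e'⁻¹).isUnit.mul h).mul (f'⁻¹).isUnit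

/-- proper factors are strictly smaller -/
theorem strict_factors (hacy : Acyc H) {y z d : H} (h : y * z = d)
    (hy : ¬ IsUnit y) (hz : ¬ IsUnit z) :
    RLt (Dvd2 : H → H → Prop) y d ∧ RLt (Dvd2 : H → H → Prop) z d := by
  subst h
  refine ⟨⟨⟨1, z, by simp⟩, ?_⟩, ⟨⟨y, 1, by simp [mul_assoc]⟩, ?_⟩⟩
  · rintro ⟨p, q, hpq⟩
    -- y = p * (y*z) * q = p * y * (z*q)
    have h2 : p * y * (z * q) = y := by
      rw [← mul_assoc, mul_assoc p y z]; exact hpq.symm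
    have := (units_of_sandwich hacy h2).2
    obtain ⟨w, hw⟩ := this
    exact hz (isUnit_of_right_inv hacy (z := z) (c := q * ↑w⁻¹)
      (by rw [← mul_assoc, ← hw, Units.mul_inv]))
  · rintro ⟨p, q, hpq⟩
    have h2 : (p * y) * z * q = z := by
      rw [mul_assoc p y z]; exact hpq.symm
    have := (units_of_sandwich hacy h2).1
    obtain ⟨w, hw⟩ := this
    exact hy (isUnit_of_left_inv hacy (z := ↑w⁻¹ * p) (c := y)
      (by rw [mul_assoc, ← hw, Units.inv_mul]))

/-- In an acyclic monoid irreducibles are atoms. -/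
theorem irred_iff_atom (hacy : Acyc H) {a : H} :
    RIrred (Dvd2 : H → H → Prop) a ↔ RAtom (Dvd2 : H → H → Prop) a := by
  constructor
  · rintro ⟨h1, h2⟩
    refine ⟨h1, fun y z hy hz hne => ?_⟩
    have hy' := (rnonunit_iff hacy).mp hy
    have hz' := (rnonunit_iff hacy).mp hz
    obtain ⟨hlt1, hlt2⟩ := strict_factors hacy hne.symm hy' hz'
    exact h2 y z hy hz hlt1 hlt2 hne
  · rintro ⟨h1, h2⟩
    exact ⟨h1, fun y z hy hz _ _ => h2 y z hy hz⟩

theorem mem_dvd2_prod {b : H} {l : List H} (hb : b ∈ l) : Dvd2 b l.prod := by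
  obtain ⟨s, t, rfl⟩ := List.mem_iff_append.mp hb
  exact ⟨s.prod, t.prod, by rw [List.prod_append, List.prod_cons, ← mul_assoc]⟩

theorem prod_not_isUnit (hacy : Acyc H) {l : List H} (hne : l ≠ [])
    (h : ∀ b ∈ l, ¬ IsUnit b) : ¬ IsUnit l.prod := by
  induction l with
  | nil => exact absurd rfl hne
  | cons b t ih =>
    rw [List.prod_cons]
    exact not_isUnit_mul_left hacy (h b (List.mem_cons_self (a := b) (l := t)))



section Words
variable {β : Type*}


theorem coe_multiset_cons_eraseIdx : ∀ (m : List β) (j : ℕ) (h : j < m.length),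
    (↑m : Multiset β) = m[j] ::ₘ ↑(m.eraseIdx j)
  | b :: t, 0, _ => by simp
  | b :: t, j + 1, h => by
    have ih := coe_multiset_cons_eraseIdx t j (by simpa using h)
    show (↑(b :: t) : Multiset β) = (b :: t)[j+1] ::ₘ ↑((b :: t).eraseIdx (j+1))
    rw [List.eraseIdx_cons_succ, List.getElem_cons_succ,
      show ((b :: t : List β) : Multiset β) = b ::ₘ ↑t from (Multiset.cons_coe b t).symm,
      show ((b :: t.eraseIdx j : List β) : Multiset β) = b ::ₘ ↑(t.eraseIdx j) from
        (Multiset.cons_coe _ _).symm,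
      ih, Multiset.cons_swap]

theorem getElem_idx_congr (l : List β) {i j : ℕ} (h : i = j) (hi : i < l.length)
    (hj : j < l.length) : l[i] = l[j] := by subst h; rfl

theorem getElem_eraseIdx_cases (m : List β) (j k k' : ℕ) (hj : j < m.length)
    (hk : k < (m.eraseIdx j).length) (hk' : k' < m.length)
    (hcase : (k < j ∧ k' = k) ∨ (j ≤ k ∧ k' = k + 1)) :
    (m.eraseIdx j)[k] = m[k'] := by
  rcases hcase with ⟨h1, h2⟩ | ⟨h1, h2⟩
  · exact (List.getElem_eraseIdx_of_lt (l := m) (i := j) (j := k) hk h1).trans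
      (getElem_idx_congr m h2.symm (by omega) hk')
  · exact (List.getElem_eraseIdx_of_ge (l := m) (i := j) (j := k) hk h1).trans
      (getElem_idx_congr m h2.symm (by rw [List.length_eraseIdx] at hk; omega) hk')

/-- From an index embedding to multiset inequality. -/
theorem multiset_le_of_emb : ∀ (l m : List β)
    (σ : Fin l.length ↪ Fin m.length) (_ : ∀ i, l.get i = m.get (σ i)),
    (↑l : Multiset β) ≤ ↑m
  | [], m, _, _ => by simp
  | a :: l', m, σ, hσ => by
    set j : Fin m.length := σ ⟨0, Nat.succ_pos _⟩ with hj
    have hjlen : (j : ℕ) < m.length := j.isLt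
    have hlen' : (m.eraseIdx j).length = m.length - 1 := by
      rw [List.length_eraseIdx]; simp [hjlen]
    have hne : ∀ i : Fin l'.length, (σ i.succ : ℕ) ≠ (j : ℕ) := by
      intro i hEq
      have h2 := σ.injective (Fin.ext hEq : σ i.succ = j)
      exact absurd (congrArg Fin.val h2) (by simp)
    let f : Fin l'.length → Fin (m.eraseIdx j).length := fun i =>
      ⟨if (σ i.succ : ℕ) < (j : ℕ) then (σ i.succ : ℕ) else (σ i.succ : ℕ) - 1, by
        have := (σ i.succ).isLt
        have := hne i
        split <;> omega⟩
    have hval : ∀ i, (f i : ℕ) =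
        if (σ i.succ : ℕ) < (j : ℕ) then (σ i.succ : ℕ) else (σ i.succ : ℕ) - 1 := fun i => rfl
    have hf : ∀ i, (m.eraseIdx j).get (f i) = m.get (σ i.succ) := by
      intro i
      rw [List.get_eq_getElem, List.get_eq_getElem]
      apply getElem_eraseIdx_cases m j (f i) (σ i.succ) hjlen (f i).isLt (σ i.succ).isLt
      have h1 := hval i
      have h2 := hne i
      by_cases h : (σ i.succ : ℕ) < (j : ℕ)
      · left; rw [if_pos h] at h1; omega
      · right; rw [if_neg h] at h1; omega
    have hfinj : Function.Injective f := by
      intro i1 i2 h12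
      have h12' := congrArg Fin.val h12
      rw [hval i1, hval i2] at h12'
      have e1 := hne i1; have e2 := hne i2
      have : (σ i1.succ : ℕ) = (σ i2.succ : ℕ) := by
        split at h12' <;> split at h12' <;> omega
      exact Fin.succ_injective _ (σ.injective (Fin.ext this))
    have ih := multiset_le_of_emb l' (m.eraseIdx j) ⟨f, hfinj⟩
      (fun i => by
        rw [show (⟨f, hfinj⟩ : Fin l'.length ↪ Fin (m.eraseIdx j).length) i = f i from rfl,
          hf i]
        exact hσ i.succ)
    have h0 : a = m.get j := hσ ⟨0, Nat.succ_pos _⟩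
    calc (↑(a :: l') : Multiset β) = a ::ₘ ↑l' := by simp
    _ ≤ a ::ₘ ↑(m.eraseIdx j) := Multiset.cons_le_cons a ih
    _ = ↑m := by rw [h0, List.get_eq_getElem, ← coe_multiset_cons_eraseIdx m j hjlen]

/-- From multiset inequality to an index embedding. -/
theorem emb_of_multiset_le : ∀ (l m : List β) (_ : (↑l : Multiset β) ≤ ↑m),
    ∃ σ : Fin l.length ↪ Fin m.length, ∀ i, l.get i = m.get (σ i)
  | [], m, _ => ⟨⟨fun i => absurd i.isLt (by simp), fun i => absurd i.isLt (by simp)⟩,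
      fun i => absurd i.isLt (by simp)⟩
  | a :: l', m, h => by
    have ha : a ∈ m := by
      have : a ∈ (↑m : Multiset β) := Multiset.mem_of_le h (by simp)
      simpa using this
    obtain ⟨j, hjlen, hja⟩ := List.mem_iff_getElem.mp ha
    have hcons := coe_multiset_cons_eraseIdx m j hjlen
    rw [hja] at hcons
    have h' : (↑l' : Multiset β) ≤ ↑(m.eraseIdx j) := by
      have h2 : a ::ₘ (↑l' : Multiset β) ≤ a ::ₘ ↑(m.eraseIdx j) := by
        rw [← hcons]; simpa using h
      exact (Multiset.cons_le_cons_iff a).mp h2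
    obtain ⟨σ', hσ'⟩ := emb_of_multiset_le l' (m.eraseIdx j) h'
    have hlen' : (m.eraseIdx j).length = m.length - 1 := by
      rw [List.length_eraseIdx]; simp [hjlen]
    let ι : Fin (m.eraseIdx j).length → Fin m.length := fun k =>
      ⟨if (k : ℕ) < j then (k : ℕ) else (k : ℕ) + 1, by
        have := k.isLt
        split <;> omega⟩
    have hval : ∀ k, (ι k : ℕ) = if (k : ℕ) < j then (k : ℕ) else (k : ℕ) + 1 := fun _ => rfl
    have hι : ∀ k, m.get (ι k) = (m.eraseIdx j).get k := by
      intro k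
      rw [List.get_eq_getElem, List.get_eq_getElem]
      refine (getElem_eraseIdx_cases m j k (ι k) hjlen k.isLt (ι k).isLt ?_).symm
      have h1 := hval k
      by_cases hk : (k : ℕ) < j
      · left; rw [if_pos hk] at h1; omega
      · right; rw [if_neg hk] at h1; omega
    have hιne : ∀ k, (ι k : ℕ) ≠ j := by
      intro k
      have h1 := hval k
      by_cases hk : (k : ℕ) < j <;> [rw [if_pos hk] at h1; rw [if_neg hk] at h1] <;> omega
    have hιinj : Function.Injective ι := by
      intro k1 k2 hk
      have hk' := congrArg Fin.val hk
      rw [hval k1, hval k2] at hk'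
      apply Fin.ext
      split at hk' <;> split at hk' <;> omega
    refine ⟨⟨fun i => Fin.cases ⟨j, hjlen⟩ (fun i' => ι (σ' i')) i, ?_⟩, ?_⟩
    · intro i1 i2 h12
      induction i1 using Fin.cases with
      | zero =>
        induction i2 using Fin.cases with
        | zero => rfl
        | succ i2' =>
          simp only [Fin.cases_zero, Fin.cases_succ] at h12
          exact absurd (congrArg Fin.val h12).symm (hιne (σ' i2'))
      | succ i1' =>
        induction i2 using Fin.cases with
        | zero =>
          simp only [Fin.cases_zero, Fin.cases_succ] at h12
          exact absurd (congrArg Fin.val h12) (hιne (σ' i1'))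
        | succ i2' =>
          simp only [Fin.cases_succ] at h12
          exact congrArg Fin.succ (σ'.injective (hιinj h12))
    · intro i
      induction i using Fin.cases with
      | zero =>
        simp only [Function.Embedding.coeFn_mk, Fin.cases_zero, List.get_eq_getElem]
        simpa using hja.symm
      | succ i' =>
        show (a :: l').get i'.succ = m.get (ι (σ' i'))
        rw [hι (σ' i')]
        simpa using hσ' i'


end Words

section Monoid
variable {H : Type*} [Monoid H]

def EqDvd (b a : H) : Prop := Dvd2 b a ∧ Dvd2 a b

theorem eqDvd_refl (a : H) : EqDvd a a := ⟨dvd2_refl a, dvd2_refl a⟩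

theorem eqDvd_symm {a b : H} (h : EqDvd a b) : EqDvd b a := ⟨h.2, h.1⟩

theorem eqDvd_trans {a b c : H} (h1 : EqDvd a b) (h2 : EqDvd b c) : EqDvd a c :=
  ⟨dvd2_trans h1.1 h2.1, dvd2_trans h2.2 h1.2⟩

theorem eqDvd_sandwich {e f a : H} (he : IsUnit e) (hf : IsUnit f) : EqDvd (e * a * f) a :=
  ⟨(sandwich_equiv he hf).1, (sandwich_equiv he hf).2⟩

/-- The key "normalization": a product of letters, each a unit or equivalent to a
non-unit of B, is a unit or a product of non-unit letters each equivalent to some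
non-unit element of B. -/
theorem norm_list (hacy : Acyc H) (B : Set H) :
    ∀ l : List H, (∀ w ∈ l, IsUnit w ∨ (¬ IsUnit w ∧ ∃ a ∈ B, ¬ IsUnit a ∧ EqDvd w a)) →
      IsUnit l.prod ∨ ∃ m : List H, m ≠ [] ∧
        (∀ b ∈ m, ¬ IsUnit b ∧ ∃ a ∈ B, ¬ IsUnit a ∧ EqDvd b a) ∧ m.prod = l.prod := by
  intro l hl
  induction l with
  | nil => left; simp
  | cons w t ih =>
    have hw := hl w (List.mem_cons_self (a := w) (l := t))
    have ih' := ih (fun b hb => hl b (List.mem_cons_of_mem w hb))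
    rw [List.prod_cons]
    rcases hw with hw | ⟨hw, a, ha, hna, heq⟩
    · rcases ih' with hu | ⟨m, hm1, hm2, hm3⟩
      · left; exact hw.mul hu
      · right
        match m, hm1 with
        | b :: m', _ =>
          refine ⟨(w * b) :: m', by simp, ?_, ?_⟩
          · intro c hc
            rcases List.mem_cons.mp hc with rfl | hc
            · obtain ⟨hb1, a, ha, hna, heq⟩ := hm2 b (List.mem_cons_self (a := b) (l := m'))
              refine ⟨not_isUnit_mul_right hacy hb1, a, ha, hna, ?_⟩
              exact eqDvd_trans (by
                have := eqDvd_sandwich (a := b) hw isUnit_one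
                rwa [mul_one] at this) heq
            · exact hm2 c (List.mem_cons_of_mem b hc)
          · rw [List.prod_cons, ← hm3, List.prod_cons, ← mul_assoc]
    · rcases ih' with hu | ⟨m, hm1, hm2, hm3⟩
      · right
        refine ⟨[w * t.prod], by simp, ?_, by simp⟩
        intro c hc
        rcases List.mem_cons.mp hc with rfl | hc
        · refine ⟨not_isUnit_mul_left hacy hw, a, ha, hna, ?_⟩
          exact eqDvd_trans (by
            have := eqDvd_sandwich (e := (1 : H)) (a := w) isUnit_one hu
            rwa [one_mul] at this) heq
        · simp at hc
      · right
        exact ⟨w :: m, by simp, fun c hc => by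
          rcases List.mem_cons.mp hc with rfl | hc
          · exact ⟨hw, a, ha, hna, heq⟩
          · exact hm2 c hc, by rw [List.prod_cons, hm3]⟩

/-- Main extraction from the f.g.u. germ hypothesis. -/
theorem germ_extract (hacy : Acyc H) {x : H}
    (hfgu : IsFGU (SubRel (Dvd2 : H → H → Prop) (GermSub x))) :
    ∃ B : Set H, B.Finite ∧ (∀ a ∈ B, ¬ IsUnit a) ∧
      ∀ y : H, Dvd2 y x → ¬ IsUnit y → ∃ m : List H, m ≠ [] ∧
        (∀ b ∈ m, ¬ IsUnit b ∧ ∃ a ∈ B, EqDvd b a) ∧ m.prod = y := by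
  obtain ⟨A, hAfin, hAtop⟩ := hfgu
  refine ⟨{a : H | (∃ a' ∈ A, (a' : H) = a) ∧ ¬ IsUnit a}, ?_, fun a ha => ha.2, ?_⟩
  · apply Set.Finite.subset (hAfin.image (Subtype.val))
    rintro a ⟨⟨a', ha', rfl⟩, -⟩
    exact ⟨a', ha', rfl⟩
  · intro y hyx hy
    have hyK : y ∈ GermSub x := Submonoid.subset_closure hyx
    have : (⟨y, hyK⟩ : GermSub x) ∈ Submonoid.closure
        {w : GermSub x | ∃ u a v : GermSub x,
          RUnit (SubRel (Dvd2 : H → H → Prop) (GermSub x)) u ∧ a ∈ A ∧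
          RUnit (SubRel (Dvd2 : H → H → Prop) (GermSub x)) v ∧ w = u * a * v} := by
      rw [hAtop]; trivial
    obtain ⟨lK, hlK, hlKprod⟩ := Submonoid.exists_list_of_mem_closure this
    have hprod : (lK.map (Subtype.val)).prod = y := by
      rw [← Submonoid.coe_list_prod, hlKprod]
    have hletters : ∀ w ∈ lK.map (Subtype.val), IsUnit w ∨
        (¬ IsUnit w ∧ ∃ a ∈ {a : H | (∃ a' ∈ A, (a' : H) = a) ∧ ¬ IsUnit a},
          ¬ IsUnit a ∧ EqDvd w a) := by
      intro w hw
      obtain ⟨wK, hwK, rfl⟩ := List.mem_map.mp hw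
      obtain ⟨u, a, v, hu, haA, hv, hw_eq⟩ := hlK wK hwK
      have huH : IsUnit (u : H) := by
        have h1 : Dvd2 (u : H) 1 := by
          have := hu.1
          simpa [SubRel] using this
        exact (dvd2_one_iff hacy).mp h1
      have hvH : IsUnit (v : H) := by
        have h1 : Dvd2 (v : H) 1 := by
          have := hv.1
          simpa [SubRel] using this
        exact (dvd2_one_iff hacy).mp h1
      have hwcoe : (wK : H) = (u : H) * (a : H) * (v : H) := by
        rw [hw_eq]; rfl
      by_cases haU : IsUnit (a : H)
      · left; rw [hwcoe]; exact (huH.mul haU).mul hvH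
      · right
        constructor
        · rw [hwcoe]
          intro hcon
          exact haU (isUnit_of_sandwich_unit hacy huH hvH hcon)
        · refine ⟨(a : H), ⟨⟨a, haA, rfl⟩, haU⟩, haU, ?_⟩
          rw [hwcoe]
          exact eqDvd_sandwich huH hvH
    rcases norm_list hacy _ (lK.map (Subtype.val)) hletters with hu | ⟨m, hm1, hm2, hm3⟩
    · rw [hprod] at hu; exact absurd hu hy
    · exact ⟨m, hm1, fun b hb => ⟨(hm2 b hb).1, (hm2 b hb).2.imp
        (fun a ha => ⟨ha.1, ha.2.2⟩)⟩, by rw [hm3, hprod]⟩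


theorem concat_facts (P : H → Prop) :
    ∀ m : List H, (∀ c ∈ m, ∃ l : List H, l ≠ [] ∧ (∀ t ∈ l, P t) ∧ l.prod = c) →
      ∃ L : List H, (m ≠ [] → L ≠ []) ∧ (∀ t ∈ L, P t) ∧ L.prod = m.prod := by
  intro m hm
  induction m with
  | nil => exact ⟨[], by simp, by simp, by simp⟩
  | cons c t ih =>
    obtain ⟨lc, hlc1, hlc2, hlc3⟩ := hm c (List.mem_cons_self (a := c) (l := t))
    obtain ⟨L, hL1, hL2, hL3⟩ := ih (fun b hb => hm b (List.mem_cons_of_mem c hb))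
    refine ⟨lc ++ L, ?_, ?_, ?_⟩
    · intro _ hcon
      exact hlc1 (List.append_eq_nil_iff.mp hcon).1
    · intro u hu
      rcases List.mem_append.mp hu with h | h
      · exact hlc2 u h
      · exact hL2 u h
    · rw [List.prod_append, hlc3, hL3, List.prod_cons]

/-- Every non-unit divisor of `x` has a non-empty atomic factorization. -/
theorem atomize (hacy : Acyc H) {x : H} {B : Set H} (hBfin : B.Finite)
    (hgen : ∀ y : H, Dvd2 y x → ¬ IsUnit y → ∃ m : List H, m ≠ [] ∧
      (∀ b ∈ m, ¬ IsUnit b ∧ ∃ a ∈ B, EqDvd b a) ∧ m.prod = y) :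
    ∀ d : H, Dvd2 d x → ¬ IsUnit d →
      ∃ l : List H, l ≠ [] ∧ (∀ c ∈ l, RAtom (Dvd2 : H → H → Prop) c) ∧ l.prod = d := by
  have hwf : WellFounded (fun a b : ↥B => RLt (Dvd2 : H → H → Prop) (↑a) (↑b)) := by
    haveI := hBfin.to_subtype
    haveI : IsTrans ↥B (fun a b : ↥B => RLt (Dvd2 : H → H → Prop) (↑a) (↑b)) :=
      ⟨fun a b c hab hbc => ⟨dvd2_trans hab.1 hbc.1, fun hcon => hab.2 (dvd2_trans hbc.1 hcon)⟩⟩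
    haveI : IsIrrefl ↥B (fun a b : ↥B => RLt (Dvd2 : H → H → Prop) (↑a) (↑b)) :=
      ⟨fun a h => h.2 h.1⟩
    exact Finite.wellFounded_of_trans_of_irrefl _
  have main : ∀ a : ↥B, ∀ d : H, Dvd2 d x → ¬ IsUnit d → EqDvd d (↑a) →
      ∃ l : List H, l ≠ [] ∧ (∀ c ∈ l, RAtom (Dvd2 : H → H → Prop) c) ∧ l.prod = d := by
    intro a
    induction a using WellFounded.induction hwf with
    | _ a IH =>
    intro d hdx hd hda
    by_cases hat : RAtom (Dvd2 : H → H → Prop) d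
    · exact ⟨[d], by simp, by simpa using hat, by simp⟩
    · have hd' : RNonUnit (Dvd2 : H → H → Prop) d := (rnonunit_iff hacy).mpr hd
      have hsplit : ∃ y z : H, RNonUnit (Dvd2 : H → H → Prop) y ∧
          RNonUnit (Dvd2 : H → H → Prop) z ∧ d = y * z := by
        by_contra hcon
        push_neg at hcon
        exact hat ⟨hd', fun y z hy hz => hcon y z hy hz⟩
      obtain ⟨y, z, hy, hz, hdyz⟩ := hsplit
      have hyU := (rnonunit_iff hacy).mp hy
      have hzU := (rnonunit_iff hacy).mp hz
      obtain ⟨hylt, hzlt⟩ := strict_factors hacy hdyz.symm hyU hzU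
      -- process one factor
      have process : ∀ w : H, ¬ IsUnit w → RLt (Dvd2 : H → H → Prop) w d →
          ∃ L : List H, L ≠ [] ∧ (∀ c ∈ L, RAtom (Dvd2 : H → H → Prop) c) ∧ L.prod = w := by
        intro w hwU hwlt
        have hwx : Dvd2 w x := dvd2_trans hwlt.1 hdx
        obtain ⟨mw, hmw1, hmw2, hmw3⟩ := hgen w hwx hwU
        have hfacts : ∀ c ∈ mw, ∃ l : List H, l ≠ [] ∧
            (∀ t ∈ l, RAtom (Dvd2 : H → H → Prop) t) ∧ l.prod = c := by
          intro c hc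
          obtain ⟨hcU, a', ha'B, hca'⟩ := hmw2 c hc
          have hcw : Dvd2 c w := by rw [← hmw3]; exact mem_dvd2_prod hc
          have hcd : RLt (Dvd2 : H → H → Prop) c d :=
            ⟨dvd2_trans hcw hwlt.1, fun hcon => hwlt.2 (dvd2_trans hcon hcw)⟩
          have ha'a : RLt (Dvd2 : H → H → Prop) (a' : H) (↑a : H) := by
            constructor
            · exact dvd2_trans hca'.2 (dvd2_trans hcd.1 hda.1)
            · intro hcon
              exact hcd.2 (dvd2_trans (dvd2_trans hda.1 hcon) hca'.2)
          exact IH ⟨a', ha'B⟩ ha'a c (dvd2_trans hcw hwx) hcU hca'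
        obtain ⟨L, hL1, hL2, hL3⟩ := concat_facts _ mw hfacts
        exact ⟨L, hL1 hmw1, hL2, by rw [hL3, hmw3]⟩
      obtain ⟨Ly, hLy1, hLy2, hLy3⟩ := process y hyU hylt
      obtain ⟨Lz, hLz1, hLz2, hLz3⟩ := process z hzU hzlt
      refine ⟨Ly ++ Lz, ?_, ?_, ?_⟩
      · intro hcon; exact hLy1 (List.append_eq_nil_iff.mp hcon).1
      · intro u hu
        rcases List.mem_append.mp hu with h | h
        · exact hLy2 u h
        · exact hLz2 u h
      · rw [List.prod_append, hLy3, hLz3, hdyz]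
  intro d hdx hd
  obtain ⟨m, hm1, hm2, hm3⟩ := hgen d hdx hd
  have hfacts : ∀ c ∈ m, ∃ l : List H, l ≠ [] ∧
      (∀ t ∈ l, RAtom (Dvd2 : H → H → Prop) t) ∧ l.prod = c := by
    intro c hc
    obtain ⟨hcU, a, haB, hca⟩ := hm2 c hc
    have hcd : Dvd2 c d := by rw [← hm3]; exact mem_dvd2_prod hc
    exact main ⟨a, haB⟩ c (dvd2_trans hcd hdx) hcU hca
  obtain ⟨L, hL1, hL2, hL3⟩ := concat_facts _ m hfacts
  exact ⟨L, hL1 hm1, hL2, by rw [hL3, hm3]⟩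


/-- an atom dividing x is equivalent to an element of B -/
theorem atom_class (hacy : Acyc H) {x : H} {B : Set H}
    (hgen : ∀ y : H, Dvd2 y x → ¬ IsUnit y → ∃ m : List H, m ≠ [] ∧
      (∀ b ∈ m, ¬ IsUnit b ∧ ∃ a ∈ B, EqDvd b a) ∧ m.prod = y)
    {b : H} (hb : RAtom (Dvd2 : H → H → Prop) b) (hbx : Dvd2 b x) :
    ∃ a ∈ B, EqDvd b a := by
  have hbU := (rnonunit_iff hacy).mp hb.1
  obtain ⟨m, hm1, hm2, hm3⟩ := hgen b hbx hbU
  match m, hm1 with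
  | [c], _ =>
    obtain ⟨-, a, haB, hca⟩ := hm2 c (List.mem_cons_self (a := c) (l := []))
    have : c = b := by simpa using hm3
    exact ⟨a, haB, this ▸ hca⟩
  | c :: c' :: t, _ =>
    exfalso
    have h1 : ¬ IsUnit c := (hm2 c (by simp)).1
    have h2 : ¬ IsUnit ((c' :: t).prod) := by
      apply prod_not_isUnit hacy (by simp)
      intro u hu
      exact (hm2 u (List.mem_cons_of_mem c hu)).1
    exact hb.2 c ((c' :: t).prod) ((rnonunit_iff hacy).mpr h1) ((rnonunit_iff hacy).mpr h2)
      (by rw [← hm3, List.prod_cons])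

theorem fac_letter_dvd {x b : H} {l : List H} (hl : l.prod = x) (hb : b ∈ l) : Dvd2 b x :=
  hl ▸ mem_dvd2_prod hb

/-- A factorization of minimal length is a minimal factorization. -/
theorem minfac_of_minlength {x : H} {l : List H} (hfac : IsFac (Dvd2 : H → H → Prop) x l)
    (hmin : ∀ m : List H, IsFac (Dvd2 : H → H → Prop) x m → l.length ≤ m.length) :
    IsMinFac (Dvd2 : H → H → Prop) x l := by
  refine ⟨hfac, fun m hm ⟨σ, hσ⟩ => ?_⟩
  have hlen : m.length = l.length :=
    le_antisymm (by
      have := Fintype.card_le_of_embedding σ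
      simpa using this) (hmin m hm)
  have hbij : Function.Bijective σ := by
    rw [Fintype.bijective_iff_injective_and_card]
    exact ⟨σ.injective, by simp [hlen]⟩
  let e := Equiv.ofBijective σ hbij
  refine ⟨e.symm.toEmbedding, fun i => ?_⟩
  have h1 := hσ (e.symm i)
  have h2 : σ (e.symm i) = i := e.apply_symm_apply i
  rw [h2] at h1
  exact ⟨h1.2, h1.1⟩

/-- Existence of a minimal atomic factorization. -/
theorem exists_minAtomicFac (hacy : Acyc H) {x : H}
    (hexists : ∃ l : List H, IsFac (Dvd2 : H → H → Prop) x l) :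
    ∃ l : List H, IsMinAtomicFac (Dvd2 : H → H → Prop) x l := by
  classical
  have hS : ∃ n : ℕ, ∃ l : List H, IsFac (Dvd2 : H → H → Prop) x l ∧ l.length = n := by
    obtain ⟨l, hl⟩ := hexists
    exact ⟨l.length, l, hl, rfl⟩
  obtain ⟨l, hl, hlen⟩ := Nat.find_spec hS
  refine ⟨l, ⟨minfac_of_minlength hl fun m hm => ?_, ?_⟩⟩
  · rw [hlen]
    exact Nat.find_min' hS ⟨m, hm, rfl⟩
  · intro a ha
    exact (irred_iff_atom hacy).mp (hl.1 a ha)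


noncomputable def rho (as : List H) : H → H := fun b =>
  (as.find? (fun a => @decide (EqDvd b a) (Classical.propDecidable _))).getD b

theorem rho_spec {as : List H} {b : H} (h : ∃ a ∈ as, EqDvd b a) :
    rho as b ∈ as ∧ EqDvd b (rho as b) := by
  have hsome : (as.find? (fun a => @decide (EqDvd b a) (Classical.propDecidable _))).isSome := by
    rw [List.find?_isSome]
    obtain ⟨a, ha, hba⟩ := h
    exact ⟨a, ha, by simp [hba]⟩
  obtain ⟨c, hc⟩ := Option.isSome_iff_exists.mp hsome
  have h1 := List.mem_of_find?_eq_some hc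
  have h2 := List.find?_some hc
  have h3 : rho as b = c := by rw [rho, hc]; rfl
  rw [h3]
  exact ⟨h1, by simpa using h2⟩

theorem rho_congr {as : List H} {b b' : H} (hb : ∃ a ∈ as, EqDvd b a) (h : EqDvd b b') :
    rho as b = rho as b' := by
  have hpred : (fun a => @decide (EqDvd b a) (Classical.propDecidable _)) =
      (fun a => @decide (EqDvd b' a) (Classical.propDecidable _)) := by
    funext a
    rw [decide_eq_decide]
    exact ⟨fun h1 => eqDvd_trans (eqDvd_symm h) h1, fun h2 => eqDvd_trans h h2⟩
  have hsome : (as.find? (fun a => @decide (EqDvd b a) (Classical.propDecidable _))).isSome := by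
    rw [List.find?_isSome]
    obtain ⟨a, ha, hba⟩ := hb
    exact ⟨a, ha, by simp [hba]⟩
  obtain ⟨c, hc⟩ := Option.isSome_iff_exists.mp hsome
  rw [rho, rho, ← hpred, hc]
  rfl

theorem rho_inv {as : List H} {b b' : H} (hb : ∃ a ∈ as, EqDvd b a)
    (hb' : ∃ a ∈ as, EqDvd b' a) (h : rho as b = rho as b') : EqDvd b b' := by
  have h1 := (rho_spec hb).2
  have h2 := (rho_spec hb').2
  rw [h] at h1
  exact eqDvd_trans h1 (eqDvd_symm h2)

/-- bridge: WordLe is multiset inequality of rho-images. -/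
theorem wordLe_iff_multiset {as : List H} {l m : List H}
    (hl : ∀ b ∈ l, ∃ a ∈ as, EqDvd b a) (hm : ∀ b ∈ m, ∃ a ∈ as, EqDvd b a) :
    WordLe (Dvd2 : H → H → Prop) l m ↔
      (↑(l.map (rho as)) : Multiset H) ≤ ↑(m.map (rho as)) := by
  constructor
  · rintro ⟨σ, hσ⟩
    apply multiset_le_of_emb
    case σ =>
      refine ⟨fun i => ⟨(σ ⟨i.1, by simpa using i.2⟩).1, by
        simpa using (σ ⟨i.1, by simpa using i.2⟩).2⟩, ?_⟩
      intro i1 i2 h12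
      have := congrArg Fin.val h12
      simp only at this
      have h3 : σ ⟨i1.1, by simpa using i1.2⟩ = σ ⟨i2.1, by simpa using i2.2⟩ := Fin.ext this
      have h4 := σ.injective h3
      exact Fin.ext (by simpa using congrArg Fin.val h4)
    intro i
    simp only [List.get_eq_getElem, List.getElem_map]
    apply rho_congr (hl _ (List.get_mem l _))
    have := hσ ⟨i.1, by simpa using i.2⟩
    exact ⟨this.1, this.2⟩
  · intro h
    obtain ⟨σ, hσ⟩ := emb_of_multiset_le _ _ h
    refine ⟨⟨fun i => ⟨(σ ⟨i.1, by simpa using i.2⟩).1, by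
        simpa using (σ ⟨i.1, by simpa using i.2⟩).2⟩, ?_⟩, ?_⟩
    · intro i1 i2 h12
      have := congrArg Fin.val h12
      simp only at this
      have h3 : σ ⟨i1.1, by simpa using i1.2⟩ = σ ⟨i2.1, by simpa using i2.2⟩ := Fin.ext this
      have h4 := σ.injective h3
      exact Fin.ext (by simpa using congrArg Fin.val h4)
    · intro i
      have hspec := hσ ⟨i.1, by simpa using i.2⟩
      simp only [List.get_eq_getElem, List.getElem_map] at hspec
      have hgood1 : ∃ a ∈ as, EqDvd (l.get i) a := hl _ (List.get_mem l ⟨i.1, i.2⟩)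
      have hgood2 : ∃ a ∈ as, EqDvd (m.get ⟨(σ ⟨i.1, by simpa using i.2⟩).1, by
          simpa using (σ ⟨i.1, by simpa using i.2⟩).2⟩) a := hm _ (List.get_mem m _)
      have := rho_inv hgood1 hgood2 (by
        simp only [List.get_eq_getElem]
        exact hspec)
      exact ⟨this.1, this.2⟩


theorem stmt15' (hacy : Acyc H)
    (hwlfgu : ∀ x : H, RNonUnit (Dvd2 : H → H → Prop) x →
      IsFGU (SubRel (Dvd2 : H → H → Prop) (GermSub x))) :
    IsFmFAtomic (Dvd2 : H → H → Prop) := by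
  classical
  intro x hx
  have hxU : ¬ IsUnit x := (rnonunit_iff hacy).mp hx
  obtain ⟨B, hBfin, hBnon, hgen⟩ := germ_extract hacy (hwlfgu x hx)
  set as : List H := hBfin.toFinset.toList with h_as
  have hBas : ∀ b : H, (∃ a ∈ B, EqDvd b a) → ∃ a ∈ as, EqDvd b a := by
    rintro b ⟨a, haB, hba⟩
    exact ⟨a, by rw [h_as, Finset.mem_toList, Set.Finite.mem_toFinset]; exact haB, hba⟩
  have hgood : ∀ l : List H, IsFac (Dvd2 : H → H → Prop) x l →
      ∀ b ∈ l, ∃ a ∈ as, EqDvd b a := by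
    intro l hl b hb
    have hatom := (irred_iff_atom hacy).mp (hl.1 b hb)
    exact hBas b (atom_class hacy hgen hatom (fac_letter_dvd hl.2 hb))
  -- existence
  have hfac : ∃ l : List H, IsFac (Dvd2 : H → H → Prop) x l := by
    obtain ⟨l, -, hl2, hl3⟩ := atomize hacy hBfin hgen x (dvd2_refl x) hxU
    exact ⟨l, fun a ha => (irred_iff_atom hacy).mpr (hl2 a ha), hl3⟩
  obtain ⟨l₀, hl₀⟩ := exists_minAtomicFac hacy hfac
  refine ⟨⟨l₀, hl₀⟩, ?_⟩
  -- finiteness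
  let σt := {a : H // a ∈ hBfin.toFinset}
  let ν : List H → (σt → ℕ) := fun l a => Multiset.count (↑a) (↑(l.map (rho as)) : Multiset H)
  have keyPQ : ∀ l m : List H, IsFac (Dvd2 : H → H → Prop) x l →
      IsFac (Dvd2 : H → H → Prop) x m →
      (WordLe (Dvd2 : H → H → Prop) l m ↔ ν l ≤ ν m) := by
    intro l m hl hm
    rw [wordLe_iff_multiset (hgood l hl) (hgood m hm), Multiset.le_iff_count]
    constructor
    · intro h a
      exact h ↑a
    · intro h c
      by_cases hc : c ∈ hBfin.toFinset
      · exact h ⟨c, hc⟩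
      · have : Multiset.count c (↑(l.map (rho as)) : Multiset H) = 0 := by
          rw [Multiset.count_eq_zero]
          intro hmem
          rw [Multiset.mem_coe, List.mem_map] at hmem
          obtain ⟨b, hb, rfl⟩ := hmem
          exact hc (by
            rw [← Finset.mem_toList, ← h_as]
            exact (rho_spec (hgood l hl b hb)).1)
        rw [this]
        exact Nat.zero_le _
  set T : Set (σt → ℕ) :=
    {v | ∃ l : List H, IsMinAtomicFac (Dvd2 : H → H → Prop) x l ∧ ν l = v} with hT
  have hanti : IsAntichain (· ≤ ·) T := by
    rintro u ⟨l, hl, rfl⟩ v ⟨l', hl', rfl⟩ hne hle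
    have h1 : WordLe (Dvd2 : H → H → Prop) l l' := (keyPQ l l' hl.1.1 hl'.1.1).mpr hle
    have h2 : WordLe (Dvd2 : H → H → Prop) l' l := hl'.1.2 l hl.1.1 h1
    have h3 : ν l' ≤ ν l := (keyPQ l' l hl'.1.1 hl.1.1).mp h2
    exact hne (le_antisymm hle h3)
  have hTfin : T.Finite := by
    haveI : Finite σt := inferInstance
    have hwo : ∀ _i : σt, IsWellOrder ℕ (· < ·) := fun _ => inferInstance
    exact hanti.finite_of_partiallyWellOrderedOn
      (Set.isPWO_of_wellQuasiOrderedLE T)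
  refine ⟨{y | ∃ v : σt → ℕ, ∃ hv : v ∈ T, hv.choose = y}, hTfin.dependent_image _, ?_⟩
  intro l hl
  have hv : ν l ∈ T := ⟨l, hl, rfl⟩
  obtain ⟨m, hm1, hm2⟩ : ∃ m, IsMinAtomicFac (Dvd2 : H → H → Prop) x m ∧ ν m = ν l :=
    ⟨hv.choose, hv.choose_spec.1, hv.choose_spec.2⟩
  refine ⟨hv.choose, ⟨ν l, hv, rfl⟩, hv.choose_spec.1, ?_, ?_⟩
  · exact (keyPQ l hv.choose hl.1.1 hv.choose_spec.1.1.1).mpr (le_of_eq hv.choose_spec.2.symm)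
  · exact (keyPQ hv.choose l hv.choose_spec.1.1.1 hl.1.1).mpr (le_of_eq hv.choose_spec.2)

end Monoid


end Aux

/-- Corollary 5.2. Every acyclic weakly l.f.g.u. monoid is
FmF-atomic (w.r.t. the divisibility preorder `∣_H`). -/
theorem stmt15 {H : Type*} [Monoid H]
    (hacy : ∀ u v x : H, (¬ IsUnit u ∨ ¬ IsUnit v) → u * x * v ≠ x)
    (hwlfgu : ∀ x : H, RNonUnit (Dvd2 : H → H → Prop) x →
      IsFGU (SubRel (Dvd2 : H → H → Prop) (GermSub x))) :
    IsFmFAtomic (Dvd2 : H → H → Prop) :=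
  stmt15' hacy hwlfgu

end FactPaper
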